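/- Let M ≥ 1 be a positive real and Q : ℕ → ℝ a nonnegative sequence with Q(1) = 0 such that Q(t+1) ≤ Q(t) + M for every t. Then for every horizon T ≥ 1, ∑_{t=1}^T Q(t) ≥ (max_{1 ≤ t ≤ T} Q(t))² / (4M). -/

import Mathlib

theorem stmt_1 (M : ℝ) (hM : 1 ≤ M) (Q : ℕ → ℝ)
    (hQpos : ∀ t : ℕ, 0 ≤ Q t) (hQ1 : Q 1 = 0)
    (hstep : ∀ t : ℕ, Q (t + 1) ≤ Q t + M)
    (T : ℕ) (hT : 1 ≤ T) :
    ((Finset.Icc 1 T).sup' (Finset.nonempty_Icc.2 hT) Q) ^ 2 / (4 * M)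
      ≤ ∑ t ∈ Finset.Icc 1 T, Q t := by
  have hMpos : (0:ℝ) < M := lt_of_lt_of_le one_pos hM
  obtain ⟨t₀, ht₀mem, ht₀⟩ :=
    Finset.exists_mem_eq_sup' (Finset.nonempty_Icc.2 hT) Q
  set m := (Finset.Icc 1 T).sup' (Finset.nonempty_Icc.2 hT) Q with hm
  have hm0 : 0 ≤ m := ht₀ ▸ hQpos t₀
  obtain ⟨ht₀1, ht₀T⟩ := Finset.mem_Icc.1 ht₀mem
  have back : ∀ k, k ≤ t₀ - 1 → m - k * M ≤ Q (t₀ - k) := by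
    intro k hk
    induction k with
    | zero => simpa using ht₀.le
    | succ n ih =>
      have hn : n ≤ t₀ - 1 := by omega
      have h1 : t₀ - n = (t₀ - (n + 1)) + 1 := by omega
      have h2 := hstep (t₀ - (n + 1))
      rw [← h1] at h2
      have := ih hn
      push_cast
      linarith
  -- lower bound on t₀
  have h1' : t₀ - (t₀ - 1) = 1 := by omega
  have hb := back (t₀ - 1) le_rfl
  rw [h1', hQ1] at hb
  have htlow : m ≤ ((t₀ - 1 : ℕ) : ℝ) * M := by linarith
  rcases eq_or_lt_of_le hm0 with hmz | hmpos
  · have : m ^ 2 / (4 * M) = 0 := by rw [← hmz]; simp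
    rw [this]
    exact Finset.sum_nonneg fun i _ => hQpos i
  · set K := Nat.floor (m / (2 * M)) with hK
    have hd0 : 0 ≤ m / (2 * M) := by positivity
    have hK1 : (K : ℝ) ≤ m / (2 * M) := Nat.floor_le hd0
    have hK2 : m / (2 * M) < (K : ℝ) + 1 := Nat.lt_floor_add_one _
    have hKM : (K : ℝ) * M ≤ m / 2 := by
      rw [le_div_iff₀ (by positivity)] at hK1
      linarith
    have hKt : K ≤ t₀ - 1 := by
      have h2 : m / (2 * M) ≤ m / M := by gcongr; linarith
      have h3 : m / M ≤ ((t₀ - 1 : ℕ) : ℝ) := by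
        rw [div_le_iff₀ hMpos]; exact htlow
      exact_mod_cast hK1.trans (h2.trans h3)
    have hsub : Finset.Icc (t₀ - K) t₀ ⊆ Finset.Icc 1 T := by
      intro x hx
      rw [Finset.mem_Icc] at *
      omega
    have hsum1 : ∑ t ∈ Finset.Icc (t₀ - K) t₀, Q t ≤ ∑ t ∈ Finset.Icc 1 T, Q t :=
      Finset.sum_le_sum_of_subset_of_nonneg hsub fun i _ _ => hQpos i
    have hlow : ∀ t ∈ Finset.Icc (t₀ - K) t₀, m / 2 ≤ Q t := by
      intro t ht
      rw [Finset.mem_Icc] at ht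
      have hk1 : t₀ - t ≤ K := by omega
      have hk2 : t₀ - t ≤ t₀ - 1 := by omega
      have hb2 := back (t₀ - t) hk2
      have he : t₀ - (t₀ - t) = t := by omega
      rw [he] at hb2
      have hc : ((t₀ - t : ℕ) : ℝ) ≤ (K : ℝ) := Nat.cast_le.2 hk1
      nlinarith
    have hcard : (Finset.Icc (t₀ - K) t₀).card = K + 1 := by
      rw [Nat.card_Icc]; omega
    have hsum2 := Finset.card_nsmul_le_sum (Finset.Icc (t₀ - K) t₀) Q (m / 2) hlow
    rw [hcard, nsmul_eq_mul] at hsum2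
    have hfinal : m ^ 2 / (4 * M) ≤ ((K : ℝ) + 1) * (m / 2) := by
      have heq : m ^ 2 / (4 * M) = (m / (2 * M)) * (m / 2) := by
        field_simp; ring
      rw [heq]
      have : 0 ≤ m / 2 := by linarith
      nlinarith
    push_cast at hsum2
    linarith
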